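/- Euler's second identity: as an identity of formal power series, the sum over n ≥ 0 of q^{n(n−1)/2} x^n / ((1−q)(1−q^2)⋯(1−q^n)) equals the infinite product ∏_{j≥0}(1 + x q^j). -/

import Mathlib

open Finset Filter Topology

namespace Stmt14

noncomputable def P (q : ℂ) (n : ℕ) : ℂ := ∏ j ∈ Finset.range n, (1 - q ^ (j + 1))

variable {q x : ℂ}

lemma fac_ne (hq : ‖q‖ < 1) (j : ℕ) : (1 : ℂ) - q ^ (j + 1) ≠ 0 := by
  have h : ‖q ^ (j + 1)‖ < 1 := by
    rw [norm_pow]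
    exact pow_lt_one₀ (norm_nonneg q) hq (Nat.succ_ne_zero j)
  intro h0
  have : q ^ (j + 1) = 1 := by linear_combination -h0
  rw [this] at h; simp at h

lemma P_ne (hq : ‖q‖ < 1) (n : ℕ) : P q n ≠ 0 :=
  Finset.prod_ne_zero_iff.mpr fun j _ => fac_ne hq j

lemma P_succ (n : ℕ) : P q (n + 1) = P q n * (1 - q ^ (n + 1)) :=
  Finset.prod_range_succ _ _

lemma e_succ (n : ℕ) : (n + 1) * ((n + 1) - 1) / 2 = n * (n - 1) / 2 + n := by
  rw [← Nat.choose_two_right, ← Nat.choose_two_right, Nat.choose_succ_succ,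
    Nat.choose_one_right, Nat.add_comm]

/-- coefficient -/
noncomputable def c (x q : ℂ) (M n : ℕ) : ℂ :=
  q ^ (n * (n - 1) / 2) * (P q M / (P q n * P q (M - n))) * x ^ n

lemma c_zero (hq : ‖q‖ < 1) (M : ℕ) : c x q M 0 = 1 := by
  simp [c, P, div_self (P_ne hq M)]
  exact P_ne hq M

lemma c_rec (hq : ‖q‖ < 1) {n N : ℕ} (h : n < N) :
    c x q (N + 1) (n + 1) = c x q N (n + 1) + c x q N n * (x * q ^ N) := by
  obtain ⟨k, rfl⟩ : ∃ k, N = n + k + 1 := ⟨N - n - 1, by omega⟩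
  have h1 : n + k + 1 + 1 - (n + 1) = k + 1 := by omega
  have h2 : n + k + 1 - (n + 1) = k := by omega
  have h3 : n + k + 1 - n = k + 1 := by omega
  rw [c, c, c, h1, h2, h3, e_succ]
  have hPN2 : P q (n + k + 1 + 1) = P q (n + k + 1) * (1 - q ^ (n + k + 1 + 1)) := P_succ _
  have hPn : P q (n + 1) = P q n * (1 - q ^ (n + 1)) := P_succ n
  have hPk : P q (k + 1) = P q k * (1 - q ^ (k + 1)) := P_succ k
  rw [hPN2, hPn, hPk]
  have hA := P_ne hq n
  have hB := P_ne hq k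
  have hfn := fac_ne hq n
  have hfk := fac_ne hq k
  field_simp
  ring

lemma P_zero : P q 0 = 1 := Finset.prod_range_zero _

lemma c_last (hq : ‖q‖ < 1) (N : ℕ) :
    c x q (N + 1) (N + 1) = c x q N N * (x * q ^ N) := by
  rw [c, c, e_succ, Nat.sub_self, Nat.sub_self]
  simp only [P_zero, mul_one]
  rw [div_self (P_ne hq (N+1)), div_self (P_ne hq N)]
  ring

lemma keyfin (hq : ‖q‖ < 1) (N : ℕ) :
    ∏ j ∈ Finset.range N, (1 + x * q ^ j) = ∑ n ∈ Finset.range (N + 1), c x q N n := by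
  induction N with
  | zero => simp [c_zero hq]
  | succ N ih =>
    have hrec : ∑ n ∈ Finset.range N, c x q (N+1) (n+1)
        = ∑ n ∈ Finset.range N, (c x q N (n+1) + c x q N n * (x * q ^ N)) :=
      Finset.sum_congr rfl fun n hn => c_rec hq (Finset.mem_range.mp hn)
    have hsum : (∑ n ∈ Finset.range N, c x q N n) + c x q N N
        = 1 + ∑ n ∈ Finset.range N, c x q N (n+1) := by
      rw [← Finset.sum_range_succ (c x q N) N, Finset.sum_range_succ' (c x q N) N, c_zero hq]
      ring
    rw [Finset.sum_range_succ' (c x q (N+1)) (N+1),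
        Finset.sum_range_succ (fun n => c x q (N+1) (n+1)) N, hrec, c_last hq,
        Finset.sum_add_distrib, c_zero hq,
        Finset.prod_range_succ, ih, Finset.sum_range_succ' (c x q N) N, c_zero hq,
        ← Finset.sum_mul]
    linear_combination (-(x * q ^ N)) * hsum

lemma geom_bound (hq : ‖q‖ < 1) (n : ℕ) : ∑ i ∈ Finset.range n, ‖q‖ ^ i ≤ (1 - ‖q‖)⁻¹ := by
  have := Summable.sum_le_tsum (Finset.range n) (fun i _ => pow_nonneg (norm_nonneg q) i)
    (summable_geometric_of_lt_one (norm_nonneg q) hq)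
  rwa [tsum_geometric_of_lt_one (norm_nonneg q) hq] at this

lemma prod_one_sub_ge (s : Finset ℕ) (f : ℕ → ℝ) (h0 : ∀ i, 0 ≤ f i) (h1 : ∀ i, f i ≤ 1) :
    1 - ∑ i ∈ s, f i ≤ ∏ i ∈ s, (1 - f i) := by
  induction s using Finset.cons_induction with
  | empty => simp
  | cons a s ha ih =>
    rw [Finset.prod_cons, Finset.sum_cons]
    have hs : 0 ≤ ∑ i ∈ s, f i := Finset.sum_nonneg fun i _ => h0 i
    have key := mul_le_mul_of_nonneg_left ih (by linarith [h1 a] : (0:ℝ) ≤ 1 - f a)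
    nlinarith [h0 a, h1 a, mul_nonneg (h0 a) hs]

lemma normP_ge (hq : ‖q‖ < 1) (n : ℕ) :
    ∏ j ∈ Finset.range n, (1 - ‖q‖ ^ (j + 1)) ≤ ‖P q n‖ := by
  rw [P, norm_prod]
  apply Finset.prod_le_prod
  · intro j _
    have : ‖q‖ ^ (j+1) < 1 := pow_lt_one₀ (norm_nonneg q) hq (Nat.succ_ne_zero j)
    linarith
  · intro j _
    calc 1 - ‖q‖^(j+1) = ‖(1:ℂ)‖ - ‖q^(j+1)‖ := by rw [norm_one, norm_pow]
    _ ≤ ‖1 - q^(j+1)‖ := norm_sub_norm_le _ _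

lemma exists_D (hq : ‖q‖ < 1) : ∃ D : ℝ, 0 < D ∧ ∀ n, D ≤ ‖P q n‖ := by
  have hr0 : 0 ≤ ‖q‖ := norm_nonneg q
  obtain ⟨K, hK⟩ : ∃ K : ℕ, ‖q‖ ^ (K + 1) * (1 - ‖q‖)⁻¹ ≤ 1/2 := by
    have h : Tendsto (fun K : ℕ => ‖q‖ ^ (K+1) * (1-‖q‖)⁻¹) atTop (𝓝 (0 * (1-‖q‖)⁻¹)) :=
      (((tendsto_pow_atTop_nhds_zero_of_lt_one hr0 hq).comp
        (tendsto_add_atTop_nat 1))).mul_const _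
    rw [zero_mul] at h
    exact (h.eventually_le_const (by norm_num : (0:ℝ) < 1/2)).exists
  have hfac : ∀ j : ℕ, 0 < 1 - ‖q‖ ^ (j+1) := fun j =>
    sub_pos.mpr (pow_lt_one₀ hr0 hq (Nat.succ_ne_zero j))
  have hfac1 : ∀ j : ℕ, 1 - ‖q‖ ^ (j+1) ≤ 1 := fun j => by
    have := pow_nonneg hr0 (j+1); linarith
  set PrK := ∏ j ∈ Finset.range K, (1 - ‖q‖ ^ (j + 1)) with hPrK
  have hPrKpos : 0 < PrK := Finset.prod_pos fun j _ => hfac j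
  refine ⟨PrK / 2, by positivity, fun n => ?_⟩
  refine le_trans ?_ (normP_ge hq n)
  rcases le_or_gt n K with h | h
  · calc PrK / 2 ≤ PrK := by linarith
    _ = (∏ j ∈ Finset.range n, (1 - ‖q‖^(j+1))) * ∏ j ∈ Finset.Ico n K, (1 - ‖q‖^(j+1)) :=
        (Finset.prod_range_mul_prod_Ico _ h).symm
    _ ≤ (∏ j ∈ Finset.range n, (1 - ‖q‖^(j+1))) * 1 := by
        apply mul_le_mul_of_nonneg_left _ (Finset.prod_nonneg fun j _ => (hfac j).le)
        exact Finset.prod_le_one (fun j _ => (hfac j).le) (fun j _ => hfac1 j)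
    _ = ∏ j ∈ Finset.range n, (1 - ‖q‖^(j+1)) := mul_one _
  · rw [← Finset.prod_range_mul_prod_Ico _ h.le]
    have htail : ∑ j ∈ Finset.Ico K n, ‖q‖ ^ (j+1) ≤ 1/2 := by
      rw [Finset.sum_Ico_eq_sum_range]
      calc ∑ i ∈ Finset.range (n - K), ‖q‖ ^ (K + i + 1)
          = ∑ i ∈ Finset.range (n - K), ‖q‖ ^ (K + 1) * ‖q‖ ^ i := by
            apply Finset.sum_congr rfl; intro i _; rw [← pow_add]; ring_nf
      _ = ‖q‖ ^ (K+1) * ∑ i ∈ Finset.range (n - K), ‖q‖ ^ i := by rw [Finset.mul_sum]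
      _ ≤ ‖q‖ ^ (K+1) * (1 - ‖q‖)⁻¹ :=
            mul_le_mul_of_nonneg_left (geom_bound hq _) (pow_nonneg hr0 _)
      _ ≤ 1/2 := hK
    have hIco : (1:ℝ)/2 ≤ ∏ j ∈ Finset.Ico K n, (1 - ‖q‖^(j+1)) := by
      refine le_trans ?_ (prod_one_sub_ge _ _ (fun j => pow_nonneg hr0 _)
        (fun j => (pow_lt_one₀ hr0 hq (Nat.succ_ne_zero j)).le))
      linarith
    calc PrK / 2 = PrK * (1/2) := by ring
    _ ≤ PrK * ∏ j ∈ Finset.Ico K n, (1 - ‖q‖^(j+1)) :=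
        mul_le_mul_of_nonneg_left hIco hPrKpos.le

lemma normQ_le (hq : ‖q‖ < 1) (m n : ℕ) :
    ‖∏ i ∈ Finset.range n, (1 - q ^ (m + i + 1))‖ ≤ Real.exp ((1 - ‖q‖)⁻¹) := by
  have hr0 : 0 ≤ ‖q‖ := norm_nonneg q
  rw [norm_prod]
  calc ∏ i ∈ Finset.range n, ‖1 - q^(m+i+1)‖
      ≤ ∏ i ∈ Finset.range n, Real.exp (‖q‖^i) := by
        apply Finset.prod_le_prod (fun i _ => norm_nonneg _)
        intro i _
        calc ‖1 - q^(m+i+1)‖ ≤ ‖(1:ℂ)‖ + ‖q^(m+i+1)‖ := norm_sub_le _ _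
        _ = 1 + ‖q‖^(m+i+1) := by rw [norm_one, norm_pow]
        _ ≤ 1 + ‖q‖^i := by
            have := pow_le_pow_of_le_one hr0 hq.le (by omega : i ≤ m + i + 1)
            linarith
        _ ≤ Real.exp (‖q‖^i) := by linarith [Real.add_one_le_exp (‖q‖^i)]
  _ = Real.exp (∑ i ∈ Finset.range n, ‖q‖^i) := (Real.exp_sum _ _).symm
  _ ≤ Real.exp ((1-‖q‖)⁻¹) := Real.exp_le_exp.mpr (geom_bound hq n)

lemma summable_g (hq : ‖q‖ < 1) (A : ℝ) (x : ℂ) :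
    Summable (fun n : ℕ => A * (‖q‖ ^ (n * (n - 1) / 2) * ‖x‖ ^ n)) := by
  have hr0 : 0 ≤ ‖q‖ := norm_nonneg q
  apply summable_of_ratio_norm_eventually_le (by norm_num : (1:ℝ)/2 < 1)
  have h : Tendsto (fun n : ℕ => ‖q‖ ^ n * ‖x‖) atTop (𝓝 (0 * ‖x‖)) :=
    (tendsto_pow_atTop_nhds_zero_of_lt_one hr0 hq).mul_const _
  rw [zero_mul] at h
  filter_upwards [h.eventually_le_const (by norm_num : (0:ℝ) < 1/2)] with n hn
  have he : (n + 1) * ((n + 1) - 1) / 2 = n * (n - 1) / 2 + n := e_succ n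
  have hgn : |A * (‖q‖ ^ ((n+1) * ((n+1) - 1) / 2) * ‖x‖ ^ (n+1))|
      = |A * (‖q‖ ^ (n * (n - 1) / 2) * ‖x‖ ^ n)| * (‖q‖ ^ n * ‖x‖) := by
    rw [he, pow_add, pow_succ, show A * (‖q‖ ^ (n * (n - 1) / 2) * ‖q‖ ^ n * (‖x‖ ^ n * ‖x‖))
        = A * (‖q‖ ^ (n * (n - 1) / 2) * ‖x‖ ^ n) * (‖q‖ ^ n * ‖x‖) by ring,
      abs_mul, abs_of_nonneg (by positivity : (0:ℝ) ≤ ‖q‖ ^ n * ‖x‖)]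
  rw [Real.norm_eq_abs, Real.norm_eq_abs, hgn]
  have habs : (0:ℝ) ≤ |A * (‖q‖ ^ (n * (n - 1) / 2) * ‖x‖ ^ n)| := abs_nonneg _
  calc |A * (‖q‖ ^ (n * (n - 1) / 2) * ‖x‖ ^ n)| * (‖q‖ ^ n * ‖x‖)
      ≤ |A * (‖q‖ ^ (n * (n - 1) / 2) * ‖x‖ ^ n)| * (1/2) :=
        mul_le_mul_of_nonneg_left hn habs
  _ = 1/2 * |A * (‖q‖ ^ (n * (n - 1) / 2) * ‖x‖ ^ n)| := by ring

lemma F_eq (hq : ‖q‖ < 1) {N n : ℕ} (h : n ≤ N) :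
    c x q N n = (q ^ (n * (n - 1) / 2) * x ^ n / P q n)
      * ∏ i ∈ Finset.range n, (1 - q ^ (N - n + i + 1)) := by
  have hsplit : P q N = P q (N - n) * ∏ i ∈ Finset.range n, (1 - q ^ (N - n + i + 1)) := by
    have hN : N = (N - n) + n := by omega
    rw [P]
    conv_lhs => rw [hN]
    rw [Finset.prod_range_add]
    rfl
  rw [c, hsplit]
  have h1 := P_ne hq n
  have h2 := P_ne hq (N - n)
  field_simp

theorem main (x q : ℂ) (hq : ‖q‖ < 1) :
    ∑' n : ℕ, q ^ (n * (n - 1) / 2) * x ^ n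
        / (∏ j ∈ Finset.range n, (1 - q ^ (j + 1)))
      = ∏' j : ℕ, (1 + x * q ^ j) := by
  classical
  have hr0 : 0 ≤ ‖q‖ := norm_nonneg q
  obtain ⟨D, hD, hDP⟩ := exists_D hq
  set C := Real.exp ((1 - ‖q‖)⁻¹) with hCdef
  set a : ℕ → ℂ := fun n => q ^ (n * (n - 1) / 2) * x ^ n / P q n with ha
  set g : ℕ → ℝ := fun n => (C / D) * (‖q‖ ^ (n * (n - 1) / 2) * ‖x‖ ^ n) with hgdef
  have hg : Summable g := summable_g hq _ x
  set F : ℕ → ℕ → ℂ := fun N n => if n ≤ N then c x q N n else 0 with hF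
  have hFsum : ∀ N, ∑' n, F N n = ∏ j ∈ Finset.range N, (1 + x * q ^ j) := by
    intro N
    rw [tsum_eq_sum (s := Finset.range (N + 1))
      (fun n hn => by
        simp only [hF]
        rw [if_neg]
        intro h
        exact hn (Finset.mem_range.mpr (Nat.lt_succ_of_le h))),
      keyfin hq N]
    exact Finset.sum_congr rfl fun n hn => by
      simp only [hF, if_pos (Nat.lt_succ_iff.mp (Finset.mem_range.mp hn))]
  have hbound : ∀ N n, ‖F N n‖ ≤ g n := by
    intro N n
    by_cases h : n ≤ N
    · simp only [hF, if_pos h]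
      rw [F_eq hq h, norm_mul]
      have h1 : ‖q ^ (n * (n - 1) / 2) * x ^ n / P q n‖
          ≤ ‖q‖ ^ (n * (n - 1) / 2) * ‖x‖ ^ n / D := by
        rw [norm_div, norm_mul, norm_pow, norm_pow]
        exact div_le_div₀ (by positivity) le_rfl hD (hDP n)
      have h2 : ‖∏ i ∈ Finset.range n, (1 - q ^ (N - n + i + 1))‖ ≤ C := normQ_le hq (N - n) n
      calc ‖q ^ (n * (n - 1) / 2) * x ^ n / P q n‖
            * ‖∏ i ∈ Finset.range n, (1 - q ^ (N - n + i + 1))‖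
          ≤ (‖q‖ ^ (n * (n - 1) / 2) * ‖x‖ ^ n / D) * C :=
            mul_le_mul h1 h2 (norm_nonneg _) (by positivity)
      _ = g n := by rw [hgdef]; ring
    · simp only [hF, if_neg h, norm_zero]
      rw [hgdef]
      have : 0 < C := Real.exp_pos _
      positivity
  have hlim : ∀ n, Tendsto (fun N => F N n) atTop (𝓝 (a n)) := by
    intro n
    have hone : ∀ i ∈ Finset.range n,
        Tendsto (fun N : ℕ => 1 - q ^ (N - n + i + 1)) atTop (𝓝 1) := by
      intro i _
      have hidx : Tendsto (fun N : ℕ => N - n + i + 1) atTop atTop :=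
        tendsto_atTop_mono (fun N => by omega) (tendsto_sub_atTop_nat n)
      have hp : Tendsto (fun N : ℕ => q ^ (N - n + i + 1)) atTop (𝓝 0) :=
        (tendsto_pow_atTop_nhds_zero_of_norm_lt_one hq).comp hidx
      simpa using tendsto_const_nhds.sub hp
    have hprodn := tendsto_finset_prod (Finset.range n) hone
    simp only [Finset.prod_const_one] at hprodn
    have hmul : Tendsto
        (fun N => (q ^ (n * (n - 1) / 2) * x ^ n / P q n)
          * ∏ i ∈ Finset.range n, (1 - q ^ (N - n + i + 1))) atTop (𝓝 (a n)) := by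
      have := tendsto_const_nhds (x := q ^ (n * (n - 1) / 2) * x ^ n / P q n)
        (f := atTop (α := ℕ)) |>.mul hprodn
      rwa [mul_one] at this
    apply hmul.congr'
    filter_upwards [eventually_ge_atTop n] with N hN
    simp only [hF, if_pos hN]
    exact (F_eq hq hN).symm
  have hDCT := tendsto_tsum_of_dominated_convergence hg hlim
    (Eventually.of_forall fun N k => hbound N k)
  have hprod : Tendsto (fun N => ∏ j ∈ Finset.range N, (1 + x * q ^ j)) atTop
      (𝓝 (∑' n, a n)) := hDCT.congr hFsum
  have hm : Multipliable (fun j : ℕ => 1 + x * q ^ j) := by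
    by_cases h0 : ∀ j : ℕ, (1 : ℂ) + x * q ^ j ≠ 0
    · refine Complex.multipliable_of_summable_log ?_
      apply Summable.of_norm_bounded_eventually_nat (g := fun n => 3 / 2 * (‖x‖ * ‖q‖ ^ n))
      · exact ((summable_geometric_of_lt_one hr0 hq).mul_left ‖x‖).mul_left (3 / 2)
      · have h : Tendsto (fun n : ℕ => ‖x‖ * ‖q‖ ^ n) atTop (𝓝 (‖x‖ * 0)) :=
          (tendsto_pow_atTop_nhds_zero_of_lt_one hr0 hq).const_mul ‖x‖
        rw [mul_zero] at h
        filter_upwards [h.eventually_le_const (by norm_num : (0:ℝ) < 1/2)] with n hn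
        have hxq : ‖x * q ^ n‖ ≤ 1 / 2 := by rwa [norm_mul, norm_pow]
        calc ‖Complex.log (1 + x * q ^ n)‖ ≤ 3 / 2 * ‖x * q ^ n‖ :=
              Complex.norm_log_one_add_half_le_self hxq
        _ = 3 / 2 * (‖x‖ * ‖q‖ ^ n) := by rw [norm_mul, norm_pow]
    · push_neg at h0
      obtain ⟨j0, hj0⟩ := h0
      refine ⟨0, ?_⟩
      have hev : (fun s : Finset ℕ => ∏ j ∈ s, (1 + x * q ^ j)) =ᶠ[atTop]
          (fun _ => (0 : ℂ)) := by
        filter_upwards [eventually_ge_atTop ({j0} : Finset ℕ)] with s hs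
        exact Finset.prod_eq_zero (Finset.singleton_subset_iff.mp hs) hj0
      exact Tendsto.congr' hev.symm tendsto_const_nhds
  exact tendsto_nhds_unique hprod hm.hasProd.tendsto_prod_nat
end Stmt14

/-- Euler's second identity: for `‖q‖ < 1` and any `x`,
`∑_{n≥0} q^{n(n−1)/2} xⁿ/(q;q)_n = (−x;q)_∞ = ∏_{j≥0} (1 + x qʲ)`. -/
theorem stmt14 (x q : ℂ) (hq : ‖q‖ < 1) :
    ∑' n : ℕ, q ^ (n * (n - 1) / 2) * x ^ n
        / (∏ j ∈ Finset.range n, (1 - q ^ (j + 1)))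
      = ∏' j : ℕ, (1 + x * q ^ j) :=
  Stmt14.main x q hq
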